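/- Let E be a field and σ : E → E a ring automorphism with σ∘σ = id and σ ≠ id; let F = {x ∈ E : σ(x) = x} be its fixed field, and let N₁ = {x ∈ E^× : x σ(x) = 1}. Let n ≥ 1. Define an action of the group (F^×)ⁿ × N₁, with coordinates (a_1,…,a_n,a_{n+1}), on the set (F^×)^{n−1} × E^×, with coordinates (k_1,…,k_{n−1},k_n), by (a·k)_i = a_i a_{i+1}^{-1} k_i for 1 ≤ i ≤ n−1 and (a·k)_n = a_n a_{n+1}^{-1} k_n. Then two tuples k, k' lie in the same orbit if and only if k'_n k_n^{-1} ∈ F^×·N₁ := {f u : f ∈ F^×, u ∈ N₁}. In particular, the orbit space is in bijection with E^×/(F^×·N₁). -/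

import Mathlib

/-- The torus action on Whittaker data for the quasi-split even orthogonal group
`SO*_{2n+2}(F)` (`E/F` quadratic with involution `σ`, `N₁` the norm-one group):
coefficients satisfy `k_0, …, k_{n-2} ∈ F^×` (σ-fixed) and `k_{n-1} ∈ E^×`;
the torus has coordinates `a_0, …, a_{n-1} ∈ F^×` and `b ∈ N₁`, acting by
`(a·k)_i = a_i a_{i+1}⁻¹ k_i` for `i < n-1` and `(a·k)_{n-1} = a_{n-1} b⁻¹ k_{n-1}`.
Two tuples lie in the same orbit iff the ratio of their last coordinates lies in
`F^×·N₁`; so orbits are parameterized by `E^×/(F^×·N₁)`. -/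
theorem stmt_13 (E : Type*) [Field E] (σ : E →+* E)
    (hσ2 : ∀ x, σ (σ x) = x) (hσ1 : σ ≠ RingHom.id E)
    (n : ℕ) (hn : 0 < n)
    (k k' : Fin n → E)
    (hk0 : ∀ i, k i ≠ 0) (hk'0 : ∀ i, k' i ≠ 0)
    (hkF : ∀ i : Fin n, (i : ℕ) + 1 < n → σ (k i) = k i)
    (hk'F : ∀ i : Fin n, (i : ℕ) + 1 < n → σ (k' i) = k' i) :
    (∃ (a : Fin n → E) (b : E), (∀ i, a i ≠ 0 ∧ σ (a i) = a i) ∧ b * σ b = 1 ∧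
      (∀ i : Fin n, k' i =
        if h : (i : ℕ) + 1 < n then a i * (a ⟨(i : ℕ) + 1, h⟩)⁻¹ * k i
        else a i * b⁻¹ * k i)) ↔
    (∃ f u : E, f ≠ 0 ∧ σ f = f ∧ u * σ u = 1 ∧
      k' ⟨n - 1, by omega⟩ * (k ⟨n - 1, by omega⟩)⁻¹ = f * u) := by
  constructor
  · rintro ⟨a, b, ha, hb, hk⟩
    have hb0 : b ≠ 0 := by
      intro h; rw [h, zero_mul] at hb; exact zero_ne_one hb
    refine ⟨a ⟨n - 1, by omega⟩, b⁻¹, (ha _).1, (ha _).2, ?_, ?_⟩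
    · rw [map_inv₀, ← mul_inv, hb, inv_one]
    · have h := hk ⟨n - 1, by omega⟩
      rw [dif_neg (by simp; omega)] at h
      have hkn := hk0 ⟨n - 1, by omega⟩
      rw [h]
      field_simp
  · rintro ⟨f, u, hf0, hfσ, hu, hr⟩
    have hu0 : u ≠ 0 := by
      intro h; rw [h, zero_mul] at hu; exact zero_ne_one hu
    set r : ℕ → E := fun j => if h : j < n then k' ⟨j, h⟩ * (k ⟨j, h⟩)⁻¹ else 1 with hrdef
    have hrne : ∀ j ∈ Finset.Ico 0 (n - 1), r j ≠ 0 := by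
      intro j hj
      rw [Finset.mem_Ico] at hj
      have hjn : j < n := by omega
      simp only [hrdef, dif_pos hjn]
      exact mul_ne_zero (hk'0 _) (inv_ne_zero (hk0 _))
    have hrσ : ∀ j, j < n - 1 → σ (r j) = r j := by
      intro j hj
      have hjn : j < n := by omega
      simp only [hrdef, dif_pos hjn, map_mul, map_inv₀]
      rw [hkF ⟨j, hjn⟩ (by simp; omega), hk'F ⟨j, hjn⟩ (by simp; omega)]
    set a : Fin n → E := fun i => f * ∏ j ∈ Finset.Ico (i : ℕ) (n - 1), r j with hadef
    have hane : ∀ i : Fin n, a i ≠ 0 := by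
      intro i
      refine mul_ne_zero hf0 (Finset.prod_ne_zero_iff.2 ?_)
      intro j hj
      exact hrne j (Finset.mem_Ico.2 ⟨Nat.zero_le _, (Finset.mem_Ico.1 hj).2⟩)
    refine ⟨a, u⁻¹, ?_, ?_, ?_⟩
    · intro i
      refine ⟨hane i, ?_⟩
      simp only [hadef, map_mul, map_prod, hfσ]
      congr 1
      exact Finset.prod_congr rfl fun j hj => hrσ j (Finset.mem_Ico.1 hj).2
    · rw [map_inv₀, ← mul_inv, hu, inv_one]
    · intro i
      by_cases h : (i : ℕ) + 1 < n
      · rw [dif_pos h]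
        have hilt : (i : ℕ) < n - 1 := by omega
        have hsplit : ∏ j ∈ Finset.Ico (i : ℕ) (n - 1), r j
            = r i * ∏ j ∈ Finset.Ico ((i : ℕ) + 1) (n - 1), r j :=
          Finset.prod_eq_prod_Ico_succ_bot hilt r
        have hpne : (∏ j ∈ Finset.Ico ((i : ℕ) + 1) (n - 1), r j) ≠ 0 := by
          refine Finset.prod_ne_zero_iff.2 fun j hj => hrne j ?_
          rw [Finset.mem_Ico] at hj ⊢
          omega
        have hri : r i = k' i * (k i)⁻¹ := by
          simp only [hrdef, dif_pos i.isLt]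
        have haa : a i = r (i : ℕ) * a ⟨(i : ℕ) + 1, h⟩ := by
          simp only [hadef]; rw [hsplit]; ring
        have hA := hane ⟨(i : ℕ) + 1, h⟩
        have hki := hk0 i
        rw [haa, hri]
        field_simp
      · rw [dif_neg h]
        have hieq : i = ⟨n - 1, by omega⟩ := by
          apply Fin.ext; simp; omega
        rw [hieq]
        have hA : a ⟨n - 1, by omega⟩ = f := by
          simp [hadef]
        rw [hA, inv_inv]
        have hkn := hk0 ⟨n - 1, by omega⟩
        field_simp at hr
        rw [hr]
        ring
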